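/- Let Φ be a Schramm sequence with each Φ_k(x) := ∑_{j=1}^k φ_j(x) strictly increasing, and let 1 ≤ q_n ↑ q ≤ ∞, 2 ≤ δ_n ↑ ∞. If limsup_{n→∞} max_{1≤k≤δ_n} k^{1/q_n} Φ_k^{−1}(1) < ∞, then every f of Φ-bounded variation on [0,1] belongs to BV^{(q_n↑q)}; moreover V(f; q_n↑q; δ) ≤ 16(1 + V_Φ(f)) · sup_n max_{1≤k≤δ_n} k^{1/q_n} Φ_k^{−1}(1). -/

import Mathlib

open Finset Filter

set_option maxHeartbeats 1000000 in
/-- Sufficiency in Theorem 1.8: let `Φ` be a Schramm sequence with each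
`Φ_k(x) = ∑_{j=1}^k φⱼ(x)` strictly increasing, and `1 ≤ qₙ ↑ q`, `2 ≤ δₙ ↑ ∞`. If
`sup_n max_{1≤k≤δₙ} k^(1/qₙ) Φ_k⁻¹(1) ≤ M < ∞`, then every `f` of `Φ`-bounded variation
(with `V_Φ(f) ≤ V`) lies in `BV^(qₙ↑q)`, with `V(f; qₙ↑q; δ) ≤ 16(1+V)·M`. -/
theorem schramm_embedding_sufficiency (φ : ℕ → ℝ → ℝ)
    (hmono : ∀ j, MonotoneOn (φ j) (Set.Ici 0))
    (hconv : ∀ j, ConvexOn ℝ (Set.Ici 0) (φ j))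
    (hzero : ∀ j, φ j 0 = 0)
    (hord : ∀ j, ∀ x : ℝ, 0 < x → 0 < φ (j + 1) x ∧ φ (j + 1) x ≤ φ j x)
    (hdivg : ∀ x : ℝ, 0 < x →
      Tendsto (fun k => ∑ j ∈ range k, φ j x) atTop atTop)
    (hstrict : ∀ k : ℕ, 1 ≤ k →
      StrictMonoOn (fun x => ∑ j ∈ range k, φ j x) (Set.Ici 0))
    (inv : ℕ → ℝ)
    (hinv : ∀ k : ℕ, 1 ≤ k → 0 ≤ inv k ∧ ∑ j ∈ range k, φ j (inv k) = 1)
    (qs : ℕ → ℝ) (hqs1 : ∀ n, 1 ≤ qs n) (hqsmono : Monotone qs)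
    (δ : ℕ → ℝ) (hδ2 : ∀ n, 2 ≤ δ n) (hδmono : Monotone δ) (hδdiv : Tendsto δ atTop atTop)
    (M : ℝ)
    (hM : ∀ (n k : ℕ), 1 ≤ k → (k : ℝ) ≤ δ n → (k : ℝ) ^ (1 / qs n) * inv k ≤ M)
    (f : ℝ → ℝ) (V : ℝ)
    (hVf : ∀ (s : ℕ) (u v : Fin s → ℝ),
      (∀ j, 0 ≤ u j ∧ u j < v j ∧ v j ≤ 1) →
      (∀ i j, i ≠ j → Set.Ioo (u i) (v i) ∩ Set.Ioo (u j) (v j) = ∅) →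
      ∑ j, φ j.1 |f (v j) - f (u j)| ≤ V) :
    ∀ (n : ℕ) (s : ℕ) (u v : Fin s → ℝ),
      (∀ j, 0 ≤ u j ∧ u j < v j ∧ v j ≤ 1) →
      (∀ i j, i ≠ j → Set.Ioo (u i) (v i) ∩ Set.Ioo (u j) (v j) = ∅) →
      (∀ j, 1 / δ n ≤ v j - u j) →
      (∑ j, |f (v j) - f (u j)| ^ (qs n)) ^ (1 / qs n) ≤ 16 * (1 + V) * M := by
  intro n s u v h01 hdisj hlen
  set q := qs n with hqdef
  have hq1 : 1 ≤ q := hqs1 n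
  have hq0 : (0:ℝ) < q := lt_of_lt_of_le one_pos hq1
  have hqne : q ≠ 0 := ne_of_gt hq0
  -- nonnegativity of φ
  have hφ0 : ∀ j x, 0 ≤ x → 0 ≤ φ j x := by
    intro j x hx
    have := hmono j (Set.mem_Ici.mpr le_rfl) (Set.mem_Ici.mpr hx) hx
    rwa [hzero j] at this
  -- φ decreasing in index on positives
  have hφdec : ∀ (i j : ℕ), i ≤ j → ∀ x : ℝ, 0 < x → φ j x ≤ φ i x := by
    intro i j hij
    induction j, hij using Nat.le_induction with
    | base => intro x _; exact le_rfl
    | succ m hm ih =>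
      intro x hx
      exact le_trans ((hord m x hx).2) (ih x hx)
  -- inv is positive
  have hinvpos : ∀ k, 1 ≤ k → 0 < inv k := by
    intro k hk
    rcases (hinv k hk).1.lt_or_eq with h | h
    · exact h
    · exfalso
      have h2 := (hinv k hk).2
      rw [← h] at h2
      simp [hzero] at h2
  -- inv is antitone
  have hinvanti : ∀ k k', 1 ≤ k → k ≤ k' → inv k' ≤ inv k := by
    intro k k' hk hkk'
    by_contra hlt
    push_neg at hlt
    have hk' : 1 ≤ k' := le_trans hk hkk'
    have h1 : (∑ j ∈ range k', φ j (inv k)) < ∑ j ∈ range k', φ j (inv k') :=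
      hstrict k' hk' (Set.mem_Ici.mpr (hinv k hk).1) (Set.mem_Ici.mpr (hinv k' hk').1) hlt
    have h2 : (∑ j ∈ range k, φ j (inv k)) ≤ ∑ j ∈ range k', φ j (inv k) := by
      apply Finset.sum_le_sum_of_subset_of_nonneg (Finset.range_subset_range.mpr hkk')
      intro j _ _
      exact hφ0 j _ (hinv k hk).1
    rw [(hinv k hk).2, (hinv k' hk').2] at *
    linarith
  -- slope inequality: x / inv k ≤ Φ_k x for inv k ≤ x
  have hslope : ∀ k x, 1 ≤ k → inv k ≤ x → x / inv k ≤ ∑ j ∈ range k, φ j x := by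
    intro k x hk hx
    have hι : 0 < inv k := hinvpos k hk
    have hxpos : 0 < x := lt_of_lt_of_le hι hx
    have key : ∀ j, φ j (inv k) ≤ (inv k / x) * φ j x := by
      intro j
      have hb : 0 ≤ inv k / x := le_of_lt (div_pos hι hxpos)
      have ha : 0 ≤ 1 - inv k / x := by
        have : inv k / x ≤ 1 := (div_le_one hxpos).mpr hx
        linarith
      have hcomb := (hconv j).2 (Set.mem_Ici.mpr (le_refl (0:ℝ)))
        (Set.mem_Ici.mpr (le_of_lt hxpos)) ha hb (by ring)
      have heq : (1 - inv k / x) • (0:ℝ) + (inv k / x) • x = inv k := by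
        rw [smul_eq_mul, smul_eq_mul, mul_zero, zero_add, div_mul_cancel₀ _ hxpos.ne']
      rw [heq] at hcomb
      simpa [hzero j] using hcomb
    have hsum : (1:ℝ) ≤ (inv k / x) * ∑ j ∈ range k, φ j x := by
      calc (1:ℝ) = ∑ j ∈ range k, φ j (inv k) := ((hinv k hk).2).symm
        _ ≤ ∑ j ∈ range k, (inv k / x) * φ j x := Finset.sum_le_sum (fun j _ => key j)
        _ = (inv k / x) * ∑ j ∈ range k, φ j x := by rw [Finset.mul_sum]
    rw [div_le_iff₀ hι]
    calc x = 1 * x := (one_mul x).symm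
      _ ≤ ((inv k / x) * ∑ j ∈ range k, φ j x) * x := by
          apply mul_le_mul_of_nonneg_right hsum (le_of_lt hxpos)
      _ = (∑ j ∈ range k, φ j x) * inv k := by field_simp
  -- V is nonnegative
  have hV0 : 0 ≤ V := by
    have := hVf 0 Fin.elim0 Fin.elim0 (fun j => j.elim0) (fun i _ _ => i.elim0)
    simpa using this
  set c : ℝ := 1 + V with hc
  have hc1 : 1 ≤ c := by linarith
  have hc0 : 0 < c := by linarith
  -- cardinality bound: s ≤ δ n
  have hδpos : (0:ℝ) < δ n := lt_of_lt_of_le two_pos (hδ2 n)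
  have hsδ : (s : ℝ) ≤ δ n := by
    have hsum1 : ∑ j : Fin s, (v j - u j) ≤ 1 := by
      have hmeas : ∑ j : Fin s, MeasureTheory.volume (Set.Ioo (u j) (v j)) =
          MeasureTheory.volume (⋃ j, Set.Ioo (u j) (v j)) := by
        rw [MeasureTheory.measure_iUnion]
        · exact (tsum_fintype _).symm
        · intro i j hij
          exact Set.disjoint_iff_inter_eq_empty.mpr (hdisj i j hij)
        · intro j; exact measurableSet_Ioo
      have hsub : (⋃ j, Set.Ioo (u j) (v j)) ⊆ Set.Icc (0:ℝ) 1 := by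
        intro x hx
        simp only [Set.mem_iUnion] at hx
        obtain ⟨j, hj⟩ := hx
        exact ⟨le_trans (h01 j).1 (le_of_lt hj.1), le_trans (le_of_lt hj.2) (h01 j).2.2⟩
      have hle : MeasureTheory.volume (⋃ j, Set.Ioo (u j) (v j)) ≤ 1 := by
        calc MeasureTheory.volume (⋃ j, Set.Ioo (u j) (v j))
            ≤ MeasureTheory.volume (Set.Icc (0:ℝ) 1) := MeasureTheory.measure_mono hsub
          _ = 1 := by rw [Real.volume_Icc]; norm_num
      have : ENNReal.ofReal (∑ j : Fin s, (v j - u j)) ≤ 1 := by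
        rw [ENNReal.ofReal_sum_of_nonneg (fun j _ => le_of_lt (sub_pos.mpr (h01 j).2.1))]
        calc ∑ j : Fin s, ENNReal.ofReal (v j - u j)
            = ∑ j : Fin s, MeasureTheory.volume (Set.Ioo (u j) (v j)) := by
              simp [Real.volume_Ioo]
          _ ≤ 1 := hmeas ▸ hle
      have := (ENNReal.ofReal_le_one).mp this
      linarith [this]
    have hlb : (s : ℝ) * (1 / δ n) ≤ ∑ j : Fin s, (v j - u j) := by
      calc (s : ℝ) * (1 / δ n) = ∑ _j : Fin s, (1 / δ n) := by
            rw [Finset.sum_const, Finset.card_univ, Fintype.card_fin, nsmul_eq_mul]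
        _ ≤ ∑ j : Fin s, (v j - u j) := Finset.sum_le_sum (fun j _ => hlen j)
    rw [mul_one_div] at hlb
    have := le_trans hlb hsum1
    calc (s:ℝ) = (s / δ n) * δ n := by field_simp
      _ ≤ 1 * δ n := mul_le_mul_of_nonneg_right this (le_of_lt hδpos)
      _ = δ n := one_mul _
  set d : ℕ := ⌊δ n⌋₊ with hd
  have hd1 : 1 ≤ d := by
    rw [hd]
    exact Nat.le_floor (by exact_mod_cast le_trans one_le_two (hδ2 n))
  have hdδ : (d : ℝ) ≤ δ n := Nat.floor_le (le_of_lt hδpos)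
  have hsd : s ≤ d := Nat.le_floor hsδ
  have hinvM : ∀ k, 1 ≤ k → k ≤ d → (k:ℝ) ^ (1/q) * inv k ≤ M := by
    intro k hk hkd
    exact hM n k hk (le_trans (by exact_mod_cast hkd) hdδ)
  have hM0 : 0 < M := lt_of_lt_of_le (hinvpos 1 le_rfl)
    (by simpa using hinvM 1 le_rfl hd1)
  have hinvd : ∀ k, 1 ≤ k → k ≤ d → (k:ℝ) * (inv k)^q ≤ M^q := by
    intro k hk hkd
    have h1 : (0:ℝ) ≤ (k:ℝ) ^ (1/q) * inv k := by
      have h2 := (hinvpos k hk).le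
      positivity
    have h2 := Real.rpow_le_rpow h1 (hinvM k hk hkd) (le_of_lt hq0)
    rwa [Real.mul_rpow (by positivity) (hinvpos k hk).le,
      ← Real.rpow_mul (Nat.cast_nonneg k), one_div, inv_mul_cancel₀ hqne,
      Real.rpow_one] at h2
  -- sorted interval differences
  set a : Fin s → ℝ := fun j => |f (v j) - f (u j)| with ha
  set σ : Equiv.Perm (Fin s) := Tuple.sort (fun j => -(a j)) with hσ
  set b : Fin s → ℝ := fun i => a (σ i) with hb
  have hb0 : ∀ i, 0 ≤ b i := fun i => abs_nonneg _
  have hbanti : ∀ i j : Fin s, i ≤ j → b j ≤ b i := by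
    intro i j hij
    have := Tuple.monotone_sort (fun j => -(a j)) hij
    simp only [Function.comp_apply] at this
    simpa [hb] using neg_le_neg_iff.mp this
  have hB : ∑ i : Fin s, φ i.1 (b i) ≤ V := by
    have := hVf s (u ∘ σ) (v ∘ σ) (fun j => h01 (σ j))
      (fun i j hij => hdisj (σ i) (σ j) (fun h => hij (σ.injective h)))
    simpa [hb, ha] using this
  have hA : ∀ i : Fin s, ∑ j ∈ range (i.1+1), φ j (b i) ≤ V := by
    intro i
    have hk : i.1 + 1 ≤ s := i.isLt
    have h1 : ∑ j : Fin (i.1+1), φ j.1 (a (σ (Fin.castLE hk j))) ≤ V := by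
      have := hVf (i.1+1) (u ∘ σ ∘ Fin.castLE hk) (v ∘ σ ∘ Fin.castLE hk)
        (fun j => h01 _)
        (fun i' j' hij => hdisj _ _
          (fun h => hij (Fin.castLE_injective hk (σ.injective h))))
      simpa [ha] using this
    have h2 : ∑ j : Fin (i.1+1), φ j.1 (b i) ≤
        ∑ j : Fin (i.1+1), φ j.1 (a (σ (Fin.castLE hk j))) := by
      apply Finset.sum_le_sum
      intro j _
      have hle : (Fin.castLE hk j) ≤ i := by
        have : j.1 ≤ i.1 := Nat.lt_succ_iff.mp j.isLt
        exact Fin.le_def.mpr this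
      exact hmono j.1 (Set.mem_Ici.mpr (hb0 i)) (Set.mem_Ici.mpr (hb0 _)) (hbanti _ i hle)
    calc ∑ j ∈ range (i.1+1), φ j (b i) = ∑ j : Fin (i.1+1), φ j.1 (b i) :=
          (Fin.sum_univ_eq_sum_range (fun j => φ j (b i)) (i.1+1)).symm
      _ ≤ V := le_trans h2 h1
  -- pointwise bound b i ≤ c * inv (i+1)
  have hbc : ∀ i : Fin s, b i ≤ c * inv (i.1+1) := by
    intro i
    set k := i.1 + 1
    have hk1 : 1 ≤ k := Nat.le_add_left 1 i.1
    rcases le_or_gt (b i) (inv k) with h | h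
    · calc b i ≤ inv k := h
        _ = 1 * inv k := (one_mul _).symm
        _ ≤ c * inv k := mul_le_mul_of_nonneg_right hc1 (hinvpos k hk1).le
    · have h1 := hslope k (b i) hk1 h.le
      have h2 := le_trans h1 (hA i)
      rw [div_le_iff₀ (hinvpos k hk1)] at h2
      calc b i ≤ V * inv k := h2
        _ ≤ c * inv k := mul_le_mul_of_nonneg_right (by linarith) (hinvpos k hk1).le
  -- the key per-index bound
  have key : ∀ i : Fin s, (b i) ^ q ≤ (2*c*M)^q / d
      + 4*(2*c)^(q-1) * M^q * φ i.1 (b i) := by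
    intro i
    set k := i.1 + 1 with hkdef
    have hk1 : 1 ≤ k := Nat.le_add_left 1 i.1
    have hkd : k ≤ d := le_trans i.isLt hsd
    rcases le_or_gt (b i) (2*c*inv d) with hsmall | hbig
    · -- small case
      have h1 : (b i)^q ≤ (2*c*inv d)^q :=
        Real.rpow_le_rpow (hb0 i) hsmall (le_of_lt hq0)
      have h2 : (2*c*inv d)^q = (2*c)^q * (inv d)^q :=
        Real.mul_rpow (by positivity) (hinvpos d hd1).le
      have h3 : (2*c)^q * (inv d)^q ≤ (2*c*M)^q / d := by
        rw [Real.mul_rpow (by positivity) hM0.le, div_eq_mul_inv, mul_assoc]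
        apply mul_le_mul_of_nonneg_left _ (Real.rpow_nonneg (by positivity) q)
        rw [← div_eq_mul_inv, le_div_iff₀
          (by exact_mod_cast Nat.lt_of_lt_of_le Nat.zero_lt_one hd1)]
        rw [mul_comm]
        exact hinvd d hd1 le_rfl
      have h4 : (0:ℝ) ≤ 4*(2*c)^(q-1) * M^q * φ i.1 (b i) := by
        have h6 := hφ0 i.1 (b i) (hb0 i)
        have h5 : (0:ℝ) ≤ (2*c)^(q-1) := Real.rpow_nonneg (by positivity) _
        positivity
      linarith [le_trans h1 (le_of_eq h2 |>.trans h3)]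
    · -- large case
      have hbpos : 0 < b i := by nlinarith [hinvpos d hd1, hbig, hc0]
      set T := (Finset.Icc k d).filter (fun j => b i ≤ 2*c*inv j) with hT
      have hkT : k ∈ T := by
        rw [hT, Finset.mem_filter, Finset.mem_Icc]
        refine ⟨⟨le_rfl, hkd⟩, ?_⟩
        calc b i ≤ c * inv k := hbc i
          _ ≤ 2*c*inv k := by nlinarith [(hinvpos k hk1).le]
      have hTne : T.Nonempty := ⟨k, hkT⟩
      set js := T.max' hTne with hjs
      have hjsT : js ∈ T := T.max'_mem hTne
      obtain ⟨hjsIcc, hjsle⟩ := Finset.mem_filter.mp hjsT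
      rw [Finset.mem_Icc] at hjsIcc
      have hjs1 : 1 ≤ js := le_trans hk1 hjsIcc.1
      have hjsd : js < d := by
        rcases lt_or_eq_of_le hjsIcc.2 with h | h
        · exact h
        · exfalso; rw [h] at hjsle; linarith
      set J := min (2*js) d with hJ
      have hJd : J ≤ d := min_le_right _ _
      have hJgt : js + 1 ≤ J := le_min (by omega) hjsd
      have hJ1 : 1 ≤ J := le_trans (by omega) hJgt
      have hJ2js : J ≤ 2*js := min_le_left _ _
      have hJnotT : ¬ (b i ≤ 2*c*inv J) := by
        intro h
        have hJT : J ∈ T := by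
          rw [hT, Finset.mem_filter, Finset.mem_Icc]
          exact ⟨⟨le_trans hjsIcc.1 (by omega), hJd⟩, h⟩
        have := Finset.le_max' T J hJT
        omega
      push_neg at hJnotT
      have hinvJpos := hinvpos J hJ1
      have ht2c : 2*c < b i / inv J := by
        rw [lt_div_iff₀ hinvJpos]; linarith
      have hbiJ : inv J ≤ b i := by nlinarith
      have hslopeJ := hslope J (b i) hJ1 hbiJ
      have hgap : (∑ j ∈ range J, φ j (b i)) - (∑ j ∈ range k, φ j (b i))
          ≤ (J:ℝ) * φ i.1 (b i) := by
        have hkJ : k ≤ J := le_trans hjsIcc.1 (by omega)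
        rw [← Finset.sum_Ico_eq_sub _ hkJ]
        calc ∑ j ∈ Finset.Ico k J, φ j (b i)
            ≤ ∑ _j ∈ Finset.Ico k J, φ i.1 (b i) := by
              apply Finset.sum_le_sum
              intro j hj
              rw [Finset.mem_Ico] at hj
              exact hφdec i.1 j (by omega) (b i) hbpos
          _ = ((J - k : ℕ) : ℝ) * φ i.1 (b i) := by
              rw [Finset.sum_const, Nat.card_Ico, nsmul_eq_mul]
          _ ≤ (J:ℝ) * φ i.1 (b i) := by
              apply mul_le_mul_of_nonneg_right _ (hφ0 i.1 (b i) (hb0 i))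
              exact_mod_cast Nat.sub_le J k
      have hmain : b i ≤ 2 * J * inv J * φ i.1 (b i) := by
        have h1 : b i / inv J ≤ V + (J:ℝ) * φ i.1 (b i) := by
          linarith [hslopeJ, hgap, hA i]
        have h2 : b i / inv J - V ≥ (b i / inv J) / 2 := by
          have hVc : V ≤ c := by linarith
          linarith
        have h3 : (b i / inv J) / 2 ≤ (J:ℝ) * φ i.1 (b i) := by linarith
        rw [div_div, div_le_iff₀ (by positivity)] at h3
        calc b i ≤ (J:ℝ) * φ i.1 (b i) * (inv J * 2) := h3
          _ = 2 * J * inv J * φ i.1 (b i) := by ring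
      have hbjs : b i ≤ 2*c*inv js := hjsle
      have hφpos : 0 ≤ φ i.1 (b i) := hφ0 i.1 (b i) (hb0 i)
      have hsplit : (b i)^q = b i * (b i)^(q-1) := by
        nth_rewrite 2 [show b i = (b i)^(1:ℝ) from (Real.rpow_one _).symm]
        rw [← Real.rpow_add hbpos]; ring_nf
      have hpow : (b i)^(q-1) ≤ (2*c*inv js)^(q-1) :=
        Real.rpow_le_rpow (hb0 i) hbjs (by linarith)
      have hinvJjs : inv J ≤ inv js := hinvanti js J hjs1 (by omega)
      have hjsM : (js:ℝ) * (inv js)^q ≤ M^q := hinvd js hjs1 (le_of_lt hjsd)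
      have final : (b i)^q ≤ 4*(2*c)^(q-1) * M^q * φ i.1 (b i) := by
        calc (b i)^q = b i * (b i)^(q-1) := hsplit
          _ ≤ (2 * J * inv J * φ i.1 (b i)) * (2*c*inv js)^(q-1) := by
              apply mul_le_mul hmain hpow (Real.rpow_nonneg (hb0 i) _)
              positivity
          _ = (2 * J * inv J) * (2*c)^(q-1) * (inv js)^(q-1) * φ i.1 (b i) := by
              rw [Real.mul_rpow (by positivity) (hinvpos js hjs1).le]; ring
          _ ≤ (4 * js * inv js) * (2*c)^(q-1) * (inv js)^(q-1) * φ i.1 (b i) := by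
              have h2J : 2 * (J:ℝ) * inv J ≤ 4 * js * inv js := by
                have hJle : (J:ℝ) ≤ 2 * js := by exact_mod_cast hJ2js
                nlinarith [hinvJpos.le, (hinvpos js hjs1).le, hinvJjs,
                  (by exact_mod_cast hJ1 : (1:ℝ) ≤ (J:ℝ))]
              apply mul_le_mul_of_nonneg_right _ hφpos
              apply mul_le_mul_of_nonneg_right _ (Real.rpow_nonneg (hinvpos js hjs1).le _)
              exact mul_le_mul_of_nonneg_right h2J (Real.rpow_nonneg (by positivity) _)
          _ = 4*(2*c)^(q-1) * ((js:ℝ) * (inv js)^q) * φ i.1 (b i) := by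
              rw [show (inv js)^q = inv js * (inv js)^(q-1) by
                nth_rewrite 1 [show q = 1 + (q-1) by ring]
                rw [Real.rpow_add (hinvpos js hjs1), Real.rpow_one]]
              ring
          _ ≤ 4*(2*c)^(q-1) * M^q * φ i.1 (b i) := by
              apply mul_le_mul_of_nonneg_right _ hφpos
              apply mul_le_mul_of_nonneg_left hjsM
              positivity
      have hd0 : (0:ℝ) < (2*c*M)^q / d := by
        have h7 : (0:ℝ) < (2*c*M)^q := Real.rpow_pos_of_pos (by positivity) q
        positivity
      linarith
  -- sum up
  have hsum : ∑ i : Fin s, (b i)^q ≤ 3 * (2*c*M)^q := by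
    have h1 : ∑ i : Fin s, (b i)^q
        ≤ ∑ i : Fin s, ((2*c*M)^q / d + 4*(2*c)^(q-1) * M^q * φ i.1 (b i)) :=
      Finset.sum_le_sum (fun i _ => key i)
    have h2 : ∑ i : Fin s, ((2*c*M)^q / d + 4*(2*c)^(q-1) * M^q * φ i.1 (b i))
        = s * ((2*c*M)^q / d) + 4*(2*c)^(q-1) * M^q * ∑ i : Fin s, φ i.1 (b i) := by
      rw [Finset.sum_add_distrib, Finset.sum_const, Finset.card_univ, Fintype.card_fin,
        nsmul_eq_mul, ← Finset.mul_sum]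
    have h3 : (s:ℝ) * ((2*c*M)^q / d) ≤ (2*c*M)^q := by
      have hdpos : (0:ℝ) < d := by exact_mod_cast Nat.lt_of_lt_of_le Nat.zero_lt_one hd1
      have hsdR : (s:ℝ) ≤ d := by exact_mod_cast hsd
      have hpow0 : (0:ℝ) ≤ (2*c*M)^q := Real.rpow_nonneg (by positivity) q
      calc (s:ℝ) * ((2*c*M)^q / d) ≤ (d:ℝ) * ((2*c*M)^q / d) := by
            apply mul_le_mul_of_nonneg_right hsdR
            positivity
        _ = (2*c*M)^q := by field_simp
    have h4 : 4*(2*c)^(q-1) * M^q * ∑ i : Fin s, φ i.1 (b i) ≤ 2 * (2*c*M)^q := by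
      have hcoef : (0:ℝ) ≤ 4*(2*c)^(q-1) * M^q := by
        have h5 : (0:ℝ) ≤ (2*c)^(q-1) := Real.rpow_nonneg (by positivity) _
        positivity
      have step1 : 4*(2*c)^(q-1) * M^q * ∑ i : Fin s, φ i.1 (b i)
          ≤ 4*(2*c)^(q-1) * M^q * V := mul_le_mul_of_nonneg_left hB hcoef
      have step2 : 4*(2*c)^(q-1) * M^q * V ≤ 2 * (2*c*M)^q := by
        rw [show q - 1 = q - (1:ℝ) by ring, Real.rpow_sub (by positivity : (0:ℝ) < 2*c),
          Real.rpow_one, Real.mul_rpow (by positivity : (0:ℝ) ≤ 2*c) hM0.le]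
        have hMq : (0:ℝ) < M^q := Real.rpow_pos_of_pos hM0 q
        have hcq : (0:ℝ) < (2*c)^q := Real.rpow_pos_of_pos (by positivity) q
        have hVle : 2*V/(2*c) ≤ 1 := by
          rw [div_le_one (by positivity)]; linarith
        calc 4*((2*c)^q/(2*c))*M^q*V = (2*((2*c)^q*M^q))*(2*V/(2*c)) := by
              field_simp; ring
          _ ≤ (2*((2*c)^q*M^q))*1 := by
              apply mul_le_mul_of_nonneg_left hVle
              positivity
          _ = 2*((2*c)^q*M^q) := by ring
      linarith
    linarith
  -- finish
  have hgoal : (∑ j : Fin s, a j ^ q) = ∑ i : Fin s, (b i)^q := by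
    rw [hb]
    exact (Equiv.sum_comp σ (fun j => a j ^ q)).symm
  have hLHS : (∑ j : Fin s, a j ^ q) ^ (1/q) ≤ (3 * (2*c*M)^q) ^ (1/q) := by
    apply Real.rpow_le_rpow _ _ (by positivity)
    · apply Finset.sum_nonneg
      intro j _
      exact Real.rpow_nonneg (abs_nonneg _) q
    · rw [hgoal]; exact hsum
  have hRHS : (3 * (2*c*M)^q) ^ (1/q) ≤ 16 * c * M := by
    have h2cM : (0:ℝ) < 2*c*M := by positivity
    rw [Real.mul_rpow (by norm_num) (Real.rpow_nonneg h2cM.le q),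
      ← Real.rpow_mul h2cM.le, mul_one_div, div_self hqne, Real.rpow_one]
    have h3q : (3:ℝ)^(1/q) ≤ 3 := by
      calc (3:ℝ)^(1/q) ≤ (3:ℝ)^(1:ℝ) := by
            apply Real.rpow_le_rpow_of_exponent_le (by norm_num)
            rw [div_le_one hq0]; exact hq1
        _ = 3 := Real.rpow_one 3
    calc (3:ℝ)^(1/q) * (2*c*M) ≤ 3 * (2*c*M) :=
          mul_le_mul_of_nonneg_right h3q h2cM.le
      _ ≤ 16 * c * M := by nlinarith
  calc (∑ j : Fin s, a j ^ q) ^ (1/q) ≤ (3 * (2*c*M)^q) ^ (1/q) := hLHS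
    _ ≤ 16 * c * M := hRHS
    _ = 16 * (1 + V) * M := by rw [hc]
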